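/- For every integer k ≥ 1 and every finite set H of half-planes in ℝ², there exists a k-coloring χ : H → Fin k such that for every point p ∈ ℝ², if the number of half-planes in H containing p is at least 4k − 3, then for every color i < k there exists a half-plane h ∈ H with χ(h) = i and p ∈ h. (That is, f̄_H(k) ≤ 4k − 3.) -/

import Mathlib

set_option linter.unusedSectionVars false
set_option linter.unusedVariables false
set_option maxHeartbeats 1000000
open scoped Classical

namespace HPW

variable {α : Type*} [LinearOrder α] [Inhabited α]

/-- covering property: `v ∈ e h` for all `h ∈ [i,j]`. -/
def Good (e : ℕ → Finset α) (v : α) (i j : ℕ) : Prop := ∀ h, i ≤ h → h ≤ j → v ∈ e h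

noncomputable def covEnd (e : ℕ → Finset α) (N : ℕ) (v : α) (i : ℕ) : ℕ :=
  Nat.findGreatest (fun j => Good e v i j) N

noncomputable def runJ (e : ℕ → Finset α) (N i : ℕ) : ℕ :=
  if h : (e i).Nonempty then (e i).sup' h (fun v => covEnd e N v i) else i

noncomputable def serv0 (e : ℕ → Finset α) (N i : ℕ) : α :=
  if h : ((e i).filter (fun v => covEnd e N v i = runJ e N i)).Nonempty
  then ((e i).filter (fun v => covEnd e N v i = runJ e N i)).max' h else default

noncomputable def starts (e : ℕ → Finset α) (N : ℕ) : ℕ → ℕ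
  | 0 => 0
  | q+1 => max (runJ e N (starts e N q) + 1) (starts e N q + 1)

variable {e : ℕ → Finset α} {N m : ℕ}

lemma covEnd_le (v : α) (i : ℕ) : covEnd e N v i ≤ N := Nat.findGreatest_le N

lemma good_self (v : α) (i : ℕ) (hv : v ∈ e i) : Good e v i i := by
  intro h h1 h2; have : h = i := le_antisymm h2 h1; rwa [this]

lemma le_covEnd (v : α) (i : ℕ) (hv : v ∈ e i) (hi : i ≤ N) : i ≤ covEnd e N v i :=
  Nat.le_findGreatest hi (good_self v i hv)

lemma good_covEnd (v : α) (i : ℕ) (hv : v ∈ e i) (hi : i ≤ N) :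
    Good e v i (covEnd e N v i) :=
  Nat.findGreatest_spec (m := i) hi (good_self v i hv)

lemma covEnd_is_greatest (v : α) (i j : ℕ) (hg : Good e v i j) (hj : j ≤ N) :
    j ≤ covEnd e N v i := Nat.le_findGreatest hj hg

lemma le_runJ (i : ℕ) (hne : (e i).Nonempty) (hi : i ≤ N) : i ≤ runJ e N i := by
  obtain ⟨v, hv⟩ := hne
  rw [runJ, dif_pos ⟨v, hv⟩]
  exact le_trans (le_covEnd v i hv hi) (Finset.le_sup' (fun u => covEnd e N u i) hv)

lemma runJ_le (i : ℕ) (hne : (e i).Nonempty) (hi : i ≤ N) : runJ e N i ≤ N := by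
  rw [runJ, dif_pos hne]
  apply Finset.sup'_le
  intro v _; exact covEnd_le v i

lemma covEnd_le_runJ (v : α) (i : ℕ) (hv : v ∈ e i) : covEnd e N v i ≤ runJ e N i := by
  rw [runJ, dif_pos ⟨v, hv⟩]; exact Finset.le_sup' (fun u => covEnd e N u i) hv

lemma serv0_spec (i : ℕ) (hne : (e i).Nonempty) :
    serv0 e N i ∈ e i ∧ covEnd e N (serv0 e N i) i = runJ e N i := by
  obtain ⟨w, hw, hws⟩ := Finset.exists_mem_eq_sup' hne (fun v => covEnd e N v i)
  have hfne : ((e i).filter (fun v => covEnd e N v i = runJ e N i)).Nonempty := by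
    refine ⟨w, Finset.mem_filter.2 ⟨hw, ?_⟩⟩
    rw [runJ, dif_pos hne, hws]
  rw [serv0, dif_pos hfne]
  have := Finset.max'_mem _ hfne
  exact ⟨(Finset.mem_filter.1 this).1, (Finset.mem_filter.1 this).2⟩

lemma serv0_tiebreak (i : ℕ) (v : α) (hv : v ∈ e i)
    (hcov : covEnd e N v i = runJ e N i) : v ≤ serv0 e N i := by
  have hfne : ((e i).filter (fun u => covEnd e N u i = runJ e N i)).Nonempty :=
    ⟨v, Finset.mem_filter.2 ⟨hv, hcov⟩⟩
  rw [serv0, dif_pos hfne]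
  exact Finset.le_max' _ v (Finset.mem_filter.2 ⟨hv, hcov⟩)

lemma serv0_in_run (i : ℕ) (hne : (e i).Nonempty) (hi : i ≤ N)
    (h : ℕ) (h1 : i ≤ h) (h2 : h ≤ runJ e N i) : serv0 e N i ∈ e h := by
  obtain ⟨hmem, hcov⟩ := serv0_spec (N := N) i hne
  exact good_covEnd _ i hmem hi h h1 (by omega)

lemma serv0_not_next (i : ℕ) (hne : (e i).Nonempty) (hi : i ≤ N)
    (hJ : runJ e N i + 1 ≤ N) : serv0 e N i ∉ e (runJ e N i + 1) := by
  intro hmem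
  obtain ⟨hm0, hcov⟩ := serv0_spec (N := N) i hne
  have hg : Good e (serv0 e N i) i (runJ e N i + 1) := by
    intro h h1 h2
    rcases Nat.lt_or_ge h (runJ e N i + 1) with hlt | hge
    · exact serv0_in_run i hne hi h h1 (by omega)
    · have : h = runJ e N i + 1 := by omega
      rwa [this]
  have := covEnd_is_greatest _ i _ hg hJ
  omega

lemma starts_lt_succ (q : ℕ) : starts e N q < starts e N (q+1) := by
  show starts e N q < max (runJ e N (starts e N q) + 1) (starts e N q + 1)
  exact lt_of_lt_of_le (Nat.lt_succ_self _) (le_max_right _ _)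

lemma starts_mono {q q' : ℕ} (h : q ≤ q') : starts e N q ≤ starts e N q' := by
  induction q' with
  | zero => have : q = 0 := by omega
            rw [this]
  | succ n ih =>
      rcases Nat.lt_or_ge q (n+1) with hlt | hge
      · exact le_trans (ih (by omega)) (le_of_lt (starts_lt_succ n))
      · have : q = n + 1 := by omega
        rw [this]

lemma le_starts (q : ℕ) : q ≤ starts e N q := by
  induction q with
  | zero => exact Nat.zero_le _
  | succ n ih => have := starts_lt_succ (e := e) (N := N) n; omega

lemma starts_succ_of_le (q : ℕ) (hne : (e (starts e N q)).Nonempty)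
    (hi : starts e N q ≤ N) : starts e N (q+1) = runJ e N (starts e N q) + 1 := by
  show max (runJ e N (starts e N q) + 1) (starts e N q + 1) = _
  have := le_runJ (N := N) (starts e N q) hne hi
  omega


section main
variable (e : ℕ → Finset α) (N m : ℕ)

/-- Separation hypothesis for a monotone chain. -/
def Sep (e : ℕ → Finset α) (N : ℕ) : Prop :=
  ∀ i j, i ≤ j → j ≤ N → ∀ a ∈ e i, a ∉ e j → ∀ b ∈ e j, b ∉ e i → a < b

def Uni (e : ℕ → Finset α) (N m : ℕ) : Prop := ∀ i, i ≤ N → (e i).card = m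

variable {e} {N} {m}

lemma sepLA (hsep : Sep e N) {g g' : ℕ} (hgg : g ≤ g') (hg' : g' ≤ N)
    {v u : α} (hv : v ∈ e g) (hv' : v ∉ e g') (hu : u ∈ e g') (huv : u < v) :
    u ∈ e g := by
  by_contra hug
  exact absurd (hsep g g' hgg hg' v hv hv' u hu hug) (asymm huv)

lemma fMin (hsep : Sep e N) (hcard : Uni e N m) {g g' : ℕ} (hgg : g ≤ g') (hg' : g' ≤ N)
    {u' : α} (hu' : u' ∈ e g') : ∃ u ∈ e g, u ≤ u' := by
  by_contra hall
  push_neg at hall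
  have hu'g : u' ∉ e g := fun h => absurd (hall u' h) (by simp)
  have hne : ∃ z, z ∈ e g ∧ z ∉ e g' := by
    by_contra hsub
    push_neg at hsub
    have hsubs : e g ⊆ e g' := fun z hz => hsub z hz
    have : e g = e g' := Finset.eq_of_subset_of_card_le hsubs
      (by rw [hcard g (le_trans hgg hg'), hcard g' hg'])
    rw [this] at hu'g; exact hu'g hu'
  obtain ⟨z, hz, hz'⟩ := hne
  have h1 := hsep g g' hgg hg' z hz hz' u' hu' hu'g
  exact absurd (hall z hz) (asymm h1)

lemma nonemptyOf (hcard : Uni e N m) (hm : 1 ≤ m) {i : ℕ} (hi : i ≤ N) : (e i).Nonempty := by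
  rw [← Finset.card_pos, hcard i hi]; omega

/-- F1: every element of the next run's first edge is above the current server. -/
lemma f1 (hsep : Sep e N) (hcard : Uni e N m) (hm : 1 ≤ m) {q : ℕ}
    (hq1 : starts e N (q+1) ≤ N) :
    ∀ u ∈ e (starts e N (q+1)), serv0 e N (starts e N q) < u := by
  intro u hu
  set i := starts e N q with hidef
  have hi : i ≤ N := le_trans (le_of_lt (starts_lt_succ q)) hq1
  have hne : (e i).Nonempty := nonemptyOf hcard hm hi
  have hstep : starts e N (q+1) = runJ e N i + 1 := starts_succ_of_le q hne hi
  set b := serv0 e N i with hbdef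
  have hJN : runJ e N i + 1 ≤ N := by rw [← hstep]; exact hq1
  have hbnot : b ∉ e (runJ e N i + 1) := serv0_not_next i hne hi hJN
  have hune : u ≠ b := by rintro rfl; rw [hstep] at hu; exact hbnot hu
  rcases lt_or_gt_of_ne hune with hlt | hgt
  · exfalso
    have hinall : ∀ h, i ≤ h → h ≤ runJ e N i → u ∈ e h := by
      intro h h1 h2
      have hbh : b ∈ e h := serv0_in_run i hne hi h h1 h2
      refine sepLA hsep (g := h) (g' := runJ e N i + 1) (by omega) hJN hbh hbnot ?_ hlt
      rwa [hstep] at hu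
    have hgood : Good e u i (runJ e N i + 1) := by
      intro h h1 h2
      rcases Nat.lt_or_ge h (runJ e N i + 1) with hlt2 | hge2
      · exact hinall h h1 (by omega)
      · have : h = runJ e N i + 1 := by omega
        rw [this, ← hstep]; exact hu
    have hui : u ∈ e i := hinall i le_rfl (le_runJ i hne hi)
    have h1 := covEnd_is_greatest u i _ hgood hJN
    have h2 := covEnd_le_runJ (N := N) u i hui
    omega
  · exact hgt

/-- F2: servers never re-appear after their run. -/
lemma f2 (hsep : Sep e N) (hcard : Uni e N m) (hm : 1 ≤ m) {q h : ℕ}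
    (hh1 : starts e N (q+1) ≤ h) (hh2 : h ≤ N) :
    serv0 e N (starts e N q) ∉ e h := by
  intro hmem
  obtain ⟨u, hu, hule⟩ := fMin hsep hcard hh1 hh2 hmem
  exact absurd hule (not_le.2 (f1 hsep hcard hm (le_trans hh1 hh2) u hu))

/-- C1: a server present before its run start is present contiguously up to it. -/
lemma c1 (hsep : Sep e N) (hcard : Uni e N m) (hm : 1 ≤ m) {t x : ℕ}
    (hx : x < starts e N t) (htN : starts e N t ≤ N)
    (hmem : serv0 e N (starts e N t) ∈ e x) :
    ∀ y, x ≤ y → y ≤ starts e N t → serv0 e N (starts e N t) ∈ e y := by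
  have hne : (e (starts e N t)).Nonempty := nonemptyOf hcard hm htN
  have hjtN : runJ e N (starts e N t) ≤ N := runJ_le _ hne htN
  have hitJ : starts e N t ≤ runJ e N (starts e N t) := le_runJ _ hne htN
  by_contra hnot
  push_neg at hnot
  obtain ⟨y0, hy01, hy02, hy03⟩ := hnot
  have hy0lt : y0 < starts e N t := by
    rcases Nat.lt_or_ge y0 (starts e N t) with h | h
    · exact h
    · exfalso
      have : y0 = starts e N t := by omega
      rw [this] at hy03
      exact hy03 (serv0_in_run _ hne htN _ le_rfl hitJ)
  have hy0x : x < y0 := by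
    rcases Nat.lt_or_ge x y0 with h | h
    · exact h
    · exfalso
      have : y0 = x := by omega
      rw [this] at hy03; exact hy03 hmem
  have hGne : ((Finset.range (starts e N t)).filter
      (fun y => x < y ∧ serv0 e N (starts e N t) ∉ e y)).Nonempty := by
    refine ⟨y0, Finset.mem_filter.2 ⟨Finset.mem_range.2 hy0lt, hy0x, hy03⟩⟩
  obtain ⟨hγit, hγx, hγnot⟩ :
      (((Finset.range (starts e N t)).filter
      (fun y => x < y ∧ serv0 e N (starts e N t) ∉ e y)).max' hGne < starts e N t) ∧
      x < ((Finset.range (starts e N t)).filter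
      (fun y => x < y ∧ serv0 e N (starts e N t) ∉ e y)).max' hGne ∧
      serv0 e N (starts e N t) ∉ e (((Finset.range (starts e N t)).filter
      (fun y => x < y ∧ serv0 e N (starts e N t) ∉ e y)).max' hGne) := by
    have := Finset.max'_mem _ hGne
    rw [Finset.mem_filter, Finset.mem_range] at this
    exact ⟨this.1, this.2.1, this.2.2⟩
  set γ := ((Finset.range (starts e N t)).filter
      (fun y => x < y ∧ serv0 e N (starts e N t) ∉ e y)).max' hGne with hγdef
  -- b present on (γ, runJ it]
  have hbpres : ∀ y, γ < y → y ≤ runJ e N (starts e N t) → serv0 e N (starts e N t) ∈ e y := by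
    intro y hy1 hy2
    rcases Nat.lt_or_ge y (starts e N t) with h | h
    · by_contra hny
      have hyG : y ∈ (Finset.range (starts e N t)).filter
          (fun y => x < y ∧ serv0 e N (starts e N t) ∉ e y) :=
        Finset.mem_filter.2 ⟨Finset.mem_range.2 h, by omega, hny⟩
      have := Finset.le_max' _ y hyG
      omega
    · exact serv0_in_run _ hne htN y h hy2
  have hγN : γ ≤ N := by omega
  have hxN : x ≤ N := by omega
  have hwex : ∃ w, w ∈ e γ ∧ w ∉ e x := by
    by_contra hsub
    push_neg at hsub
    have heq : e γ = e x := Finset.eq_of_subset_of_card_le (fun z hz => hsub z hz)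
      (by rw [hcard γ hγN, hcard x hxN])
    rw [heq] at hγnot; exact hγnot hmem
  obtain ⟨w, hwγ, hwx⟩ := hwex
  have hbw : serv0 e N (starts e N t) < w := hsep x γ (by omega) hγN _ hmem hγnot w hwγ hwx
  have hwpres : ∀ y, γ < y → y ≤ runJ e N (starts e N t) → w ∈ e y := by
    intro y hy1 hy2
    by_contra hwy
    have hby := hbpres y hy1 hy2
    exact absurd (hsep γ y (by omega) (by omega) w hwγ hwy _ hby hγnot) (asymm hbw)
  have hwgood : Good e w (starts e N t) (runJ e N (starts e N t)) := by
    intro h h1 h2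
    exact hwpres h (by omega) h2
  have hwit : w ∈ e (starts e N t) := hwpres _ (by omega) hitJ
  have h1 := covEnd_is_greatest w (starts e N t) _ hwgood hjtN
  have h2 := covEnd_le_runJ (N := N) w (starts e N t) hwit
  have heq : covEnd e N w (starts e N t) = runJ e N (starts e N t) := le_antisymm h2 h1
  exact absurd (serv0_tiebreak _ w hwit heq) (not_le.2 hbw)

/-- existence of the run containing `h`. -/
lemma run_exists (hcard : Uni e N m) (hm : 1 ≤ m) :
    ∀ h, h ≤ N → ∃ q, starts e N q ≤ h ∧ h ≤ runJ e N (starts e N q) ∧ starts e N q ≤ N := by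
  intro h
  induction h with
  | zero =>
      intro hh
      have h0 : starts e N 0 = 0 := by simp [starts]
      have hne : (e (starts e N 0)).Nonempty := nonemptyOf hcard hm (by omega)
      have := le_runJ (N := N) (starts e N 0) hne (by omega)
      exact ⟨0, by omega, by omega, by omega⟩
  | succ n ih =>
      intro hh
      obtain ⟨q, hq1, hq2, hq3⟩ := ih (by omega)
      rcases Nat.lt_or_ge (runJ e N (starts e N q)) (n+1) with hlt | hge
      · -- h = n+1 starts a new run
        have hne : (e (starts e N q)).Nonempty := nonemptyOf hcard hm hq3
        have hstep : starts e N (q+1) = runJ e N (starts e N q) + 1 :=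
          starts_succ_of_le q hne hq3
        have heq : starts e N (q+1) = n + 1 := by omega
        have hq1N : starts e N (q+1) ≤ N := by omega
        have hne1 : (e (starts e N (q+1))).Nonempty := nonemptyOf hcard hm hq1N
        have := le_runJ (N := N) (starts e N (q+1)) hne1 hq1N
        exact ⟨q+1, by omega, by omega, hq1N⟩
      · exact ⟨q, by omega, hge, hq3⟩

theorem chain_shallow_hitting' (hm : 1 ≤ m) (hcard : Uni e N m) (hsep : Sep e N) :
    ∃ C : Finset α, ∀ h, h ≤ N →
      (∃ c ∈ C, c ∈ e h) ∧ (e h ∩ C).card ≤ 2 := by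
  classical
  refine ⟨(((Finset.range (N+1)).filter (fun q => starts e N q ≤ N)).image
    (fun q => serv0 e N (starts e N q))), fun h hh => ?_⟩
  obtain ⟨q, hq1, hq2, hq3⟩ := run_exists hcard hm h hh
  have hne : (e (starts e N q)).Nonempty := nonemptyOf hcard hm hq3
  have hstep : starts e N (q+1) = runJ e N (starts e N q) + 1 :=
    starts_succ_of_le q hne hq3
  have hqQ : q ∈ (Finset.range (N+1)).filter (fun q => starts e N q ≤ N) := by
    rw [Finset.mem_filter, Finset.mem_range]
    have := le_starts (e := e) (N := N) q
    exact ⟨by omega, hq3⟩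
  constructor
  · exact ⟨serv0 e N (starts e N q), Finset.mem_image_of_mem _ hqQ,
      serv0_in_run _ hne hq3 h hq1 hq2⟩
  · have hsub : e h ∩ (((Finset.range (N+1)).filter (fun q => starts e N q ≤ N)).image
        (fun q => serv0 e N (starts e N q))) ⊆
        {serv0 e N (starts e N q), serv0 e N (starts e N (q+1))} := by
      intro c hc
      rw [Finset.mem_inter] at hc
      obtain ⟨hceh, hcC⟩ := hc
      obtain ⟨t, htQ, hteq⟩ := Finset.mem_image.1 hcC
      rw [Finset.mem_filter, Finset.mem_range] at htQ
      obtain ⟨htr, htN⟩ := htQ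
      subst hteq
      rcases Nat.lt_or_ge t q with hlt | hge
      · exfalso
        have hmono : starts e N (t+1) ≤ starts e N q := starts_mono (by omega)
        exact f2 hsep hcard hm (le_trans hmono hq1) hh hceh
      rcases Nat.eq_or_lt_of_le hge with heq | hgt
      · exact Finset.mem_insert.2 (Or.inl (by rw [← heq]))
      rcases Nat.eq_or_lt_of_le (by omega : q + 1 ≤ t) with heq1 | hgt1
      · exact Finset.mem_insert.2 (Or.inr (by rw [← heq1]; exact Finset.mem_singleton_self _))
      · exfalso
        have hq2t : q + 2 ≤ t := by omega
        have hmono12 : starts e N (q+1) ≤ starts e N (q+2) := starts_mono (by omega)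
        have hmono2t : starts e N (q+2) ≤ starts e N t := starts_mono hq2t
        have hhx : h < starts e N t := by omega
        have hcontig := c1 hsep hcard hm hhx htN hceh
        have hs1N : starts e N (q+1) ≤ N := by omega
        have hs2N : starts e N (q+2) ≤ N := by omega
        have hne1 : (e (starts e N (q+1))).Nonempty := nonemptyOf hcard hm hs1N
        have hstep2 : starts e N (q+2) = runJ e N (starts e N (q+1)) + 1 :=
          starts_succ_of_le (q+1) hne1 hs1N
        have hgood : Good e (serv0 e N (starts e N t)) (starts e N (q+1))
            (runJ e N (starts e N (q+1)) + 1) := by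
          intro y hy1 hy2
          refine hcontig y ?_ ?_
          · omega
          · omega
        have h1 := covEnd_is_greatest (N := N) (serv0 e N (starts e N t)) (starts e N (q+1))
          (runJ e N (starts e N (q+1)) + 1) hgood (by omega)
        have hbmem : serv0 e N (starts e N t) ∈ e (starts e N (q+1)) := by
          refine hcontig (starts e N (q+1)) ?_ ?_
          · omega
          · omega
        have h2 := covEnd_le_runJ (N := N) (serv0 e N (starts e N t)) _ hbmem
        omega
    calc (e h ∩ _).card ≤ _ := Finset.card_le_card hsub
    _ ≤ 2 := by
      apply le_trans (Finset.card_insert_le _ _)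
      simp

end main
end HPW

namespace HPW2

/-- existence of the set of `m` largest elements under an injective key. -/
lemma exists_top {γ β : Type*} [LinearOrder β] (L : Finset γ) (key : γ → β)
    (hinj : ∀ x ∈ L, ∀ y ∈ L, key x = key y → x = y) :
    ∀ m : ℕ, m ≤ L.card → ∃ U, U ⊆ L ∧ U.card = m ∧
      ∀ u ∈ U, ∀ v ∈ L, v ∉ U → key v < key u := by
  intro m
  induction m with
  | zero => intro _; exact ⟨∅, Finset.empty_subset _, Finset.card_empty, by simp⟩
  | succ n ih =>
      intro hm
      obtain ⟨U, hUL, hUc, hUp⟩ := ih (by omega)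
      have hne : (L \ U).Nonempty := by
        rw [← Finset.card_pos, Finset.card_sdiff_of_subset hUL]; omega
      obtain ⟨u, hu, hmax⟩ := Finset.exists_max_image (L \ U) key hne
      rw [Finset.mem_sdiff] at hu
      refine ⟨insert u U, ?_, ?_, ?_⟩
      · exact Finset.insert_subset hu.1 hUL
      · rw [Finset.card_insert_of_notMem hu.2, hUc]
      · intro w hw v hv hvU
        have hvU' : v ∉ U := fun h => hvU (Finset.mem_insert_of_mem h)
        have hvu : v ≠ u := fun h => hvU (h ▸ Finset.mem_insert_self u U)
        rcases Finset.mem_insert.1 hw with rfl | hwU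
        · have hle := hmax v (Finset.mem_sdiff.2 ⟨hv, hvU'⟩)
          rcases lt_or_eq_of_le hle with h | h
          · exact h
          · exact absurd (hinj v hv w hu.1 h) hvu
        · exact hUp w hwU v hv hvU'

/-- the slope comparison: a line above at `X` and below at `X' > X` has smaller slope. -/
lemma slope_lt {a1 a2 b1 b2 X X' : ℝ} (hXX : X < X')
    (h1 : b1*X + b2 < a1*X + a2) (h2 : a1*X' + a2 < b1*X' + b2) : a1 < b1 := by
  by_contra hs
  push_neg at hs
  have h3 : (a1 - b1)*X ≤ (a1 - b1)*X' := mul_le_mul_of_nonneg_left hXX.le (by linarith)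
  nlinarith

lemma slope_eq {a1 a2 b1 b2 X X' : ℝ} (hXX : X ≠ X')
    (h1 : a1*X + a2 = b1*X + b2) (h2 : a1*X' + a2 = b1*X' + b2) : a1 = b1 ∧ a2 = b2 := by
  have h3 : (a1 - b1) * (X - X') = 0 := by nlinarith
  rcases mul_eq_zero.1 h3 with h | h
  · constructor
    · linarith
    · have : a1 = b1 := by linarith
      rw [this] at h1; linarith
  · exfalso; apply hXX; linarith

/-- Main shallow-hitting lemma for finite families of (slope, intercept) pairs. -/
lemma lines_shallow (L : Finset (ℝ × ℝ)) (m : ℕ) (hm : 1 ≤ m) (hmL : m ≤ L.card) :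
    ∃ C : Finset (ℝ × ℝ), C ⊆ L ∧ ∀ X Y : ℝ,
      m ≤ (L.filter (fun l => Y ≤ l.1*X + l.2)).card →
      (∃ c ∈ C, Y ≤ c.1*X + c.2) ∧
      m - 2 ≤ ((L.filter (fun l => Y ≤ l.1*X + l.2)) \ C).card := by
  classical
  -- lexified family
  set eqv : ℝ × ℝ ≃ ℝ ×ₗ ℝ := toLex with heqv
  set LL : Finset (ℝ ×ₗ ℝ) := L.map eqv.toEmbedding with hLL
  have hLLcard : LL.card = L.card := Finset.card_map _
  -- refined key
  set key : ℝ → (ℝ ×ₗ ℝ) → (ℝ ×ₗ ℝ ×ₗ ℝ) :=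
    fun X ll => toLex ((ofLex ll).1 * X + (ofLex ll).2, toLex ((ofLex ll).1, (ofLex ll).2))
    with hkey
  have hkeyinj : ∀ X : ℝ, ∀ x ∈ LL, ∀ y ∈ LL, key X x = key X y → x = y := by
    intro X x _ y _ h
    rw [hkey] at h
    have h1 : ((ofLex x).1 * X + (ofLex x).2, toLex ((ofLex x).1, (ofLex x).2)) =
        ((ofLex y).1 * X + (ofLex y).2, toLex ((ofLex y).1, (ofLex y).2)) := toLex_inj.1 h
    have h2 : toLex ((ofLex x).1, (ofLex x).2) = toLex ((ofLex y).1, (ofLex y).2) :=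
      congrArg Prod.snd h1
    have h3 := toLex_inj.1 h2
    simp only [Prod.mk.eta] at h3
    exact ofLex_inj.1 h3
  have hmLL : m ≤ LL.card := by rw [hLLcard]; exact hmL
  -- the top-m set for each X
  have hTex : ∀ X : ℝ, ∃ U, U ⊆ LL ∧ U.card = m ∧
      ∀ u ∈ U, ∀ v ∈ LL, v ∉ U → key X v < key X u :=
    fun X => exists_top LL (key X) (hkeyinj X) m hmLL
  set T : ℝ → Finset (ℝ ×ₗ ℝ) := fun X => (hTex X).choose with hT
  have hTsub : ∀ X, T X ⊆ LL := fun X => (hTex X).choose_spec.1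
  have hTcard : ∀ X, (T X).card = m := fun X => (hTex X).choose_spec.2.1
  have hTtop : ∀ X, ∀ u ∈ T X, ∀ v ∈ LL, v ∉ T X → key X v < key X u :=
    fun X => (hTex X).choose_spec.2.2
  -- (T3) : T X is contained in every heavy upset
  have hT3 : ∀ X Y : ℝ, ∀ U : Finset (ℝ ×ₗ ℝ),
      U = LL.filter (fun ll => Y ≤ (ofLex ll).1 * X + (ofLex ll).2) →
      m ≤ U.card → T X ⊆ U := by
    intro X Y U hUdef hUcard
    intro u huT
    by_contra huU
    have hUsub : U ⊆ T X := by
      intro v hvU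
      by_contra hvT
      have hvLL : v ∈ LL := by rw [hUdef] at hvU; exact (Finset.mem_filter.1 hvU).1
      have hlt := hTtop X u huT v hvLL hvT
      -- but f X v ≥ Y > f X u, so key X v > key X u
      have hfv : Y ≤ (ofLex v).1 * X + (ofLex v).2 := by
        rw [hUdef] at hvU; exact (Finset.mem_filter.1 hvU).2
      have hfu : ¬ (Y ≤ (ofLex u).1 * X + (ofLex u).2) := by
        intro hge
        apply huU
        rw [hUdef]
        exact Finset.mem_filter.2 ⟨hTsub X huT, hge⟩
      push_neg at hfu
      have : key X u < key X v := by
        rw [hkey]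
        rw [Prod.Lex.lt_iff]
        left
        simp only [ofLex_toLex]
        linarith
      exact absurd hlt (asymm this)
    have : U = T X := Finset.eq_of_subset_of_card_le hUsub (by rw [hTcard]; exact hUcard)
    rw [this] at huU
    exact huU huT
  -- (T4) separation
  have hT4 : ∀ X X' : ℝ, X < X' → ∀ a, a ∈ T X → a ∉ T X' → ∀ b, b ∈ T X' → b ∉ T X →
      a < b := by
    intro X X' hXX a haT haT' b hbT' hbT
    have haLL : a ∈ LL := hTsub X haT
    have hbLL : b ∈ LL := hTsub X' hbT'
    have h1 : key X b < key X a := hTtop X a haT b hbLL hbT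
    have h2 : key X' a < key X' b := hTtop X' b hbT' a haLL haT'
    rw [hkey, Prod.Lex.lt_iff] at h1 h2
    simp only [ofLex_toLex] at h1 h2
    set a1 := (ofLex a).1; set a2 := (ofLex a).2
    set b1 := (ofLex b).1; set b2 := (ofLex b).2
    have hgoal : toLex ((a1, a2)) < toLex ((b1, b2)) → a < b := by
      intro h
      have ha : a = toLex (a1, a2) := by
        show a = toLex ((ofLex a).1, (ofLex a).2)
        simp
      have hb : b = toLex (b1, b2) := by
        show b = toLex ((ofLex b).1, (ofLex b).2)
        simp
      rw [ha, hb]; exact h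
    apply hgoal
    rw [Prod.Lex.lt_iff]
    simp only [ofLex_toLex]
    rcases h1 with hf1 | ⟨he1, hl1⟩
    · rcases h2 with hf2 | ⟨he2, hl2⟩
      · -- strict at both: slope comparison
        left
        exact slope_lt hXX hf1 hf2
      · -- equal at X', tie-break says a < b there
        rw [Prod.Lex.lt_iff] at hl2
        simp only [ofLex_toLex] at hl2
        exact hl2
    · -- equal at X
      rcases h2 with hf2 | ⟨he2, hl2⟩
      · -- strict at X' : slope a1 < b1 but tie-break at X said b < a
        exfalso
        rw [Prod.Lex.lt_iff] at hl1
        simp only [ofLex_toLex] at hl1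
        have hslope : a1 < b1 := by
          by_contra hs
          push_neg at hs
          have h3 : (a1 - b1)*X ≤ (a1 - b1)*X' := mul_le_mul_of_nonneg_left hXX.le (by linarith)
          nlinarith
        rcases hl1 with h | ⟨h, _⟩
        · linarith
        · linarith
      · -- equal at both: same line, contradiction
        exfalso
        obtain ⟨hc1, hc2⟩ := slope_eq (ne_of_lt hXX) he1.symm he2
        have : a = b := by
          have : ofLex a = ofLex b := Prod.ext hc1 hc2
          exact ofLex_inj.1 this
        rw [this] at haT
        exact hbT haT
  -- extract a finite monotone chain of representatives
  have hrange : (Set.range T).Finite := by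
    apply Set.Finite.subset (LL.powerset.finite_toSet)
    rintro S ⟨X, rfl⟩
    simp only [Finset.coe_powerset, Set.mem_preimage, Set.mem_powerset_iff,
      Finset.coe_subset]
    exact hTsub X
  set rep : Finset (ℝ ×ₗ ℝ) → ℝ := fun S => if h : ∃ X, T X = S then h.choose else 0
    with hrep
  set R : Finset ℝ := hrange.toFinset.image rep with hR
  have hRrep : ∀ X : ℝ, ∃ X₀ ∈ R, T X₀ = T X := by
    intro X
    have hmem : T X ∈ hrange.toFinset := by
      rw [Set.Finite.mem_toFinset]; exact ⟨X, rfl⟩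
    have hex : ∃ X', T X' = T X := ⟨X, rfl⟩
    refine ⟨rep (T X), Finset.mem_image_of_mem _ hmem, ?_⟩
    rw [hrep]
    simp only [dif_pos hex]
    exact hex.choose_spec
  have hRne : R.Nonempty := by
    obtain ⟨X₀, hX₀, _⟩ := hRrep 0
    exact ⟨X₀, hX₀⟩
  set N : ℕ := R.card - 1 with hN
  have hRcard : R.card = N + 1 := by
    have := Finset.card_pos.2 hRne
    omega
  set emb := R.orderIsoOfFin hRcard with hemb
  set idx : ℕ → Fin (N+1) := fun i => ⟨min i N, by omega⟩ with hidx
  set ee : ℕ → Finset (ℝ ×ₗ ℝ) := fun i => T (emb (idx i)) with hee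
  -- chain properties
  have hchaincard : HPW.Uni ee N m := by
    intro i hi
    rw [hee]; exact hTcard _
  have hchainsep : HPW.Sep ee N := by
    intro i j hij hj a ha0 ha0' b hb0 hb0'
    have ha : a ∈ T ((emb (idx i) : R) : ℝ) := ha0
    have ha' : a ∉ T ((emb (idx j) : R) : ℝ) := ha0'
    have hb : b ∈ T ((emb (idx j) : R) : ℝ) := hb0
    have hb' : b ∉ T ((emb (idx i) : R) : ℝ) := hb0'
    have hmle : idx i ≤ idx j := by
      rw [hidx]
      simp only [Fin.mk_le_mk]
      omega
    have hXle : ((emb (idx i) : R) : ℝ) ≤ ((emb (idx j) : R) : ℝ) := by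
      exact_mod_cast emb.monotone hmle
    rcases lt_or_eq_of_le hXle with hlt | heqX
    · exact hT4 _ _ hlt a ha ha' b hb hb'
    · exfalso
      rw [heqX] at ha
      exact ha' ha
  haveI : Inhabited (ℝ ×ₗ ℝ) := ⟨toLex (0,0)⟩
  obtain ⟨CC, hCC⟩ := HPW.chain_shallow_hitting' hm hchaincard hchainsep
  -- pull back
  refine ⟨L.filter (fun l => toLex l ∈ CC), Finset.filter_subset _ _, ?_⟩
  intro X Y hXY
  -- identify T X with a chain element
  obtain ⟨X₀, hX₀R, hTX₀⟩ := hRrep X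
  obtain ⟨i₀, hi₀⟩ := emb.surjective ⟨X₀, hX₀R⟩
  have hi₀N : (i₀ : ℕ) ≤ N := by omega
  have heei : ee (i₀ : ℕ) = T X := by
    have hidxi : idx (i₀ : ℕ) = i₀ := by
      rw [hidx]
      apply Fin.ext
      simp only
      omega
    show T ((emb (idx (i₀ : ℕ)) : R) : ℝ) = T X
    rw [hidxi, hi₀]
    exact hTX₀
  obtain ⟨⟨c, hcCC, hcee⟩, hply⟩ := hCC (i₀ : ℕ) hi₀N
  rw [heei] at hcee hply
  -- the heavy upset
  set U : Finset (ℝ × ℝ) := L.filter (fun l => Y ≤ l.1*X + l.2) with hU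
  set Uℓ : Finset (ℝ ×ₗ ℝ) := U.map eqv.toEmbedding with hUℓ
  have hUℓdef : Uℓ = LL.filter (fun ll => Y ≤ (ofLex ll).1 * X + (ofLex ll).2) := by
    ext ll
    simp only [hUℓ, hU, hLL, Finset.mem_map_equiv, Finset.mem_filter]
    constructor
    · rintro ⟨h1, h2⟩
      exact ⟨h1, h2⟩
    · rintro ⟨h1, h2⟩
      exact ⟨h1, h2⟩
  have hUcard : m ≤ Uℓ.card := by
    rw [hUℓ, Finset.card_map]
    exact hXY
  have hTsubU : T X ⊆ Uℓ := hT3 X Y Uℓ hUℓdef hUcard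
  constructor
  · -- hitting
    have hcU : c ∈ Uℓ := hTsubU hcee
    rw [hUℓ, Finset.mem_map_equiv] at hcU
    rw [hU, Finset.mem_filter] at hcU
    refine ⟨eqv.symm c, Finset.mem_filter.2 ⟨hcU.1, ?_⟩, hcU.2⟩
    show toLex (eqv.symm c) ∈ CC
    have : toLex ((eqv.symm c : ℝ × ℝ)) = c := by
      rw [heqv]; simp
    rw [this]; exact hcCC
  · -- shallowness
    have hsd : ((T X) \ CC).card = m - ((T X) ∩ CC).card := by
      have := Finset.card_inter_add_card_sdiff (T X) CC
      rw [hTcard X] at this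
      omega
    have hsdge : m - 2 ≤ ((T X) \ CC).card := by omega
    have himg : ((T X) \ CC).image (fun ll => (eqv.symm ll : ℝ × ℝ)) ⊆ U \ (L.filter (fun l => toLex l ∈ CC)) := by
      intro l hl
      obtain ⟨ll, hll, rfl⟩ := Finset.mem_image.1 hl
      rw [Finset.mem_sdiff] at hll
      have hllU : ll ∈ Uℓ := hTsubU hll.1
      rw [hUℓ, Finset.mem_map_equiv] at hllU
      rw [Finset.mem_sdiff]
      constructor
      · exact hllU
      · intro hmem
        rw [Finset.mem_filter] at hmem
        apply hll.2
        have : toLex ((eqv.symm ll : ℝ × ℝ)) = ll := by rw [heqv]; simp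
        rw [← this]
        exact hmem.2
    have hcardimg : ((T X) \ CC).card = (((T X) \ CC).image (fun ll => (eqv.symm ll : ℝ × ℝ))).card := by
      rw [Finset.card_image_of_injective _ (eqv.symm.injective)]
    calc m - 2 ≤ ((T X) \ CC).card := hsdge
    _ = _ := hcardimg
    _ ≤ (U \ (L.filter (fun l => toLex l ∈ CC))).card := Finset.card_le_card himg

end HPW2


namespace HPW3

/-- One-class polychromatic coloring: `2k-1` depth suffices for lower halfplanes
given as (slope, intercept) pairs. -/
theorem oneclass : ∀ (k : ℕ), ∀ (L : Finset (ℝ × ℝ)), 1 ≤ k →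
    ∃ χ : (ℝ × ℝ) → Fin k, ∀ X Y : ℝ,
      2*k - 1 ≤ (L.filter (fun l => Y ≤ l.1 * X + l.2)).card →
      ∀ i : Fin k, ∃ l ∈ L, χ l = i ∧ Y ≤ l.1 * X + l.2 := by
  intro k
  induction k with
  | zero => intro L h; omega
  | succ n ih =>
      intro L _
      by_cases hn : n = 0
      · -- base case k = 1
        subst hn
        refine ⟨fun _ => ⟨0, by omega⟩, ?_⟩
        intro X Y hcard i
        have hpos : 0 < (L.filter (fun l => Y ≤ l.1 * X + l.2)).card := by omega
        obtain ⟨l, hl⟩ := Finset.card_pos.1 hpos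
        rw [Finset.mem_filter] at hl
        refine ⟨l, hl.1, ?_, hl.2⟩
        apply Fin.ext
        have := i.2
        simp only
        omega
      · have hn1 : 1 ≤ n := by omega
        by_cases hsmall : L.card < 2*(n+1) - 1
        · refine ⟨fun _ => ⟨0, by omega⟩, ?_⟩
          intro X Y hcard i
          exfalso
          have := Finset.card_filter_le L (fun l => Y ≤ l.1 * X + l.2)
          omega
        · push_neg at hsmall
          obtain ⟨C, hCL, hC⟩ := HPW2.lines_shallow L (2*(n+1) - 1) (by omega) hsmall
          obtain ⟨χ', hχ'⟩ := ih (L \ C) hn1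
          refine ⟨fun l => if l ∈ C then ⟨n, by omega⟩ else Fin.castLE (by omega) (χ' l), ?_⟩
          intro X Y hcard i
          obtain ⟨hhit, hshallow⟩ := hC X Y hcard
          by_cases hi : (i : ℕ) = n
          · obtain ⟨c, hcC, hcY⟩ := hhit
            refine ⟨c, hCL hcC, ?_, hcY⟩
            simp only [if_pos hcC]
            exact Fin.ext (by simp [hi])
          · have hi' : (i : ℕ) < n := by have := i.2; omega
            have hsd : (L.filter (fun l => Y ≤ l.1 * X + l.2)) \ C =
                (L \ C).filter (fun l => Y ≤ l.1 * X + l.2) := by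
              ext l
              simp only [Finset.mem_sdiff, Finset.mem_filter]
              tauto
            have hUc : 2*n - 1 ≤ ((L \ C).filter (fun l => Y ≤ l.1 * X + l.2)).card := by
              rw [← hsd]
              omega
            obtain ⟨l, hlL, hχl, hlY⟩ := hχ' X Y hUc ⟨(i : ℕ), hi'⟩
            have hlC : l ∉ C := (Finset.mem_sdiff.1 hlL).2
            refine ⟨l, (Finset.mem_sdiff.1 hlL).1, ?_, hlY⟩
            simp only [if_neg hlC]
            apply Fin.ext
            rw [hχl]
            rfl

/-- Coloring a single class of halfplanes, with normals positive against `v`. -/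
theorem class_color (k : ℕ) (hk : 1 ≤ k) (G : Finset (Set (ℝ × ℝ)))
    (A : Set (ℝ × ℝ) → ℝ × ℝ) (Bf : Set (ℝ × ℝ) → ℝ) (v : ℝ × ℝ)
    (hvv : 0 < v.1^2 + v.2^2)
    (hpos : ∀ g ∈ G, 0 < (A g).1 * v.1 + (A g).2 * v.2)
    (hrep : ∀ g ∈ G, g = {x : ℝ × ℝ | (A g).1 * x.1 + (A g).2 * x.2 ≤ Bf g}) :
    ∃ χ : Set (ℝ × ℝ) → Fin k, ∀ p : ℝ × ℝ,
      2*k - 1 ≤ (G.filter (fun g => p ∈ g)).card →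
      ∀ i : Fin k, ∃ g ∈ G, χ g = i ∧ p ∈ g := by
  classical
  -- the transformed line of each halfplane
  set ℓ : Set (ℝ × ℝ) → ℝ × ℝ := fun g =>
    (-((A g).1 * (-v.2) + (A g).2 * v.1) / ((A g).1 * v.1 + (A g).2 * v.2),
      (Bf g) * (v.1^2 + v.2^2) / ((A g).1 * v.1 + (A g).2 * v.2)) with hℓ
  -- membership is the one-class condition
  have hmem : ∀ g ∈ G, ∀ p : ℝ × ℝ,
      p ∈ g ↔ (v.1 * p.1 + v.2 * p.2) ≤
        (ℓ g).1 * ((-v.2) * p.1 + v.1 * p.2) + (ℓ g).2 := by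
    intro g hg p
    have hd : 0 < (A g).1 * v.1 + (A g).2 * v.2 := hpos g hg
    have hdne : ((A g).1 * v.1 + (A g).2 * v.2) ≠ 0 := ne_of_gt hd
    conv_lhs => rw [hrep g hg]
    simp only [Set.mem_setOf_eq, hℓ]
    have hexpr : -((A g).1 * (-v.2) + (A g).2 * v.1) / ((A g).1 * v.1 + (A g).2 * v.2) *
          ((-v.2) * p.1 + v.1 * p.2) +
          (Bf g) * (v.1^2 + v.2^2) / ((A g).1 * v.1 + (A g).2 * v.2) =
        (-((A g).1 * (-v.2) + (A g).2 * v.1) * ((-v.2) * p.1 + v.1 * p.2) +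
          (Bf g) * (v.1^2 + v.2^2)) / ((A g).1 * v.1 + (A g).2 * v.2) := by
      field_simp
    rw [hexpr, le_div_iff₀ hd]
    have hid : (v.1 * p.1 + v.2 * p.2) * ((A g).1 * v.1 + (A g).2 * v.2) +
        ((A g).1 * (-v.2) + (A g).2 * v.1) * ((-v.2) * p.1 + v.1 * p.2) =
        ((A g).1 * p.1 + (A g).2 * p.2) * (v.1^2 + v.2^2) := by ring
    constructor
    · intro h
      nlinarith [mul_le_mul_of_nonneg_right h hvv.le]
    · intro h
      have h2 : ((A g).1 * p.1 + (A g).2 * p.2) * (v.1^2 + v.2^2) ≤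
          (Bf g) * (v.1^2 + v.2^2) := by nlinarith
      exact le_of_mul_le_mul_right h2 hvv
  -- injectivity of ℓ on G
  have hinj : ∀ g ∈ G, ∀ g' ∈ G, ℓ g = ℓ g' → g = g' := by
    intro g hg g' hg' heq
    ext p
    rw [hmem g hg p, hmem g' hg' p, heq]
  obtain ⟨χ₀, hχ₀⟩ := oneclass k (G.image ℓ) hk
  refine ⟨fun g => χ₀ (ℓ g), ?_⟩
  intro p hp i
  set X := (-v.2) * p.1 + v.1 * p.2 with hX
  set Y := v.1 * p.1 + v.2 * p.2 with hY
  have himg : (G.filter (fun g => p ∈ g)).image ℓ =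
      (G.image ℓ).filter (fun l => Y ≤ l.1 * X + l.2) := by
    ext l
    simp only [Finset.mem_image, Finset.mem_filter]
    constructor
    · rintro ⟨g, hg, rfl⟩
      exact ⟨⟨g, hg.1, rfl⟩, (hmem g hg.1 p).1 hg.2⟩
    · rintro ⟨⟨g, hgG, rfl⟩, hYle⟩
      exact ⟨g, ⟨hgG, (hmem g hgG p).2 hYle⟩, rfl⟩
  have hcard : ((G.image ℓ).filter (fun l => Y ≤ l.1 * X + l.2)).card =
      (G.filter (fun g => p ∈ g)).card := by
    rw [← himg]
    apply Finset.card_image_of_injOn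
    intro g hg g' hg' heq
    exact hinj g (Finset.mem_filter.1 hg).1 g' (Finset.mem_filter.1 hg').1 heq
  have hheavy : 2*k - 1 ≤ ((G.image ℓ).filter (fun l => Y ≤ l.1 * X + l.2)).card := by
    rw [hcard]; exact hp
  obtain ⟨l, hlL, hχl, hlY⟩ := hχ₀ X Y hheavy i
  obtain ⟨g, hgG, rfl⟩ := Finset.mem_image.1 hlL
  exact ⟨g, hgG, hχl, (hmem g hgG p).2 hlY⟩

end HPW3


open scoped Classical

/-- `f̄_H(k) ≤ 4k - 3`: every finite set of half-planes can be `k`-colored so that any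
point covered by at least `4k - 3` of the half-planes is covered by one of each color. -/
theorem halfplanes_points_polychromatic_weak (k : ℕ) (hk : 1 ≤ k)
    (H : Finset (Set (ℝ × ℝ)))
    (hH : ∀ h ∈ H, ∃ (a : ℝ × ℝ) (b : ℝ), a ≠ 0 ∧
      h = {x : ℝ × ℝ | a.1 * x.1 + a.2 * x.2 ≤ b}) :
    ∃ χ : Set (ℝ × ℝ) → Fin k,
      ∀ p : ℝ × ℝ, 4 * k - 3 ≤ (H.filter (fun h => p ∈ h)).card →
        ∀ i : Fin k, ∃ h ∈ H, χ h = i ∧ p ∈ h := by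
  classical
  set P : Set (ℝ × ℝ) → Prop := fun h => ∃ (a : ℝ × ℝ) (b : ℝ), a ≠ 0 ∧
      h = {x : ℝ × ℝ | a.1 * x.1 + a.2 * x.2 ≤ b} with hPdef
  set A : Set (ℝ × ℝ) → ℝ × ℝ := fun h => if hp : P h then hp.choose else (1, 0) with hA
  set Bf : Set (ℝ × ℝ) → ℝ := fun h =>
    if hp : P h then hp.choose_spec.choose else 0 with hB
  have hAB : ∀ h ∈ H, A h ≠ 0 ∧ h = {x : ℝ × ℝ | (A h).1 * x.1 + (A h).2 * x.2 ≤ Bf h} := by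
    intro h hh
    have hp : P h := hH h hh
    have h1 : A h = hp.choose := by rw [hA]; simp only [dif_pos hp]
    have h2 : Bf h = hp.choose_spec.choose := by rw [hB]; simp only [dif_pos hp]
    obtain ⟨hne, heq⟩ := hp.choose_spec.choose_spec
    rw [h1, h2]
    exact ⟨hne, heq⟩
  obtain ⟨t, ht⟩ := Infinite.exists_notMem_finset (H.image (fun h => -(A h).1 / (A h).2))
  have hvne : ∀ h ∈ H, (A h).1 * 1 + (A h).2 * t ≠ 0 := by
    intro h hh heq
    by_cases h2 : (A h).2 = 0
    · have h1 : (A h).1 ≠ 0 := by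
        intro h10
        apply (hAB h hh).1
        apply Prod.ext <;> simp [h10, h2]
      rw [h2] at heq
      apply h1
      linarith
    · apply ht
      refine Finset.mem_image.2 ⟨h, hh, ?_⟩
      field_simp
      linear_combination -heq
  set v : ℝ × ℝ := (1, t) with hv
  have hvv : (0:ℝ) < v.1^2 + v.2^2 := by
    have : v.1 = 1 := rfl
    nlinarith [sq_nonneg v.2]
  set Hp := H.filter (fun h => 0 < (A h).1 * v.1 + (A h).2 * v.2) with hHp
  set Hm := H.filter (fun h => (A h).1 * v.1 + (A h).2 * v.2 < 0) with hHm
  obtain ⟨χp, hχp⟩ := HPW3.class_color k hk Hp A Bf v hvv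
    (fun g hg => (Finset.mem_filter.1 hg).2)
    (fun g hg => (hAB g (Finset.mem_filter.1 hg).1).2)
  have hvv' : (0:ℝ) < ((-v.1, -v.2) : ℝ × ℝ).1^2 + ((-v.1, -v.2) : ℝ × ℝ).2^2 := by
    simp only
    nlinarith [hvv]
  obtain ⟨χm, hχm⟩ := HPW3.class_color k hk Hm A Bf (-v.1, -v.2) hvv'
    (fun g hg => by
      have hneg := (Finset.mem_filter.1 hg).2
      have hneg2 : (A g).1 * v.1 + (A g).2 * v.2 < 0 := hneg
      show 0 < (A g).1 * (-v.1) + (A g).2 * (-v.2)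
      nlinarith [hneg2])
    (fun g hg => (hAB g (Finset.mem_filter.1 hg).1).2)
  refine ⟨fun S => if 0 < (A S).1 * v.1 + (A S).2 * v.2 then χp S else χm S, ?_⟩
  intro p hp i
  have hsplitset : H.filter (fun h => p ∈ h) =
      (Hp.filter (fun h => p ∈ h)) ∪ (Hm.filter (fun h => p ∈ h)) := by
    ext g
    simp only [Finset.mem_union, Finset.mem_filter, hHp, hHm]
    constructor
    · rintro ⟨hgH, hgp⟩
      rcases lt_trichotomy ((A g).1 * v.1 + (A g).2 * v.2) 0 with hcmp | hcmp | hcmp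
      · right; exact ⟨⟨hgH, hcmp⟩, hgp⟩
      · exfalso; exact hvne g hgH hcmp
      · left; exact ⟨⟨hgH, hcmp⟩, hgp⟩
    · rintro (⟨⟨h1, _⟩, h3⟩ | ⟨⟨h1, _⟩, h3⟩) <;> exact ⟨h1, h3⟩
  have hdisj : Disjoint (Hp.filter (fun h => p ∈ h)) (Hm.filter (fun h => p ∈ h)) := by
    rw [Finset.disjoint_left]
    intro g hg1 hg2
    have a1 := (Finset.mem_filter.1 (Finset.mem_filter.1 hg1).1).2
    have a2 := (Finset.mem_filter.1 (Finset.mem_filter.1 hg2).1).2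
    linarith
  have hcards : (H.filter (fun h => p ∈ h)).card =
      (Hp.filter (fun h => p ∈ h)).card + (Hm.filter (fun h => p ∈ h)).card := by
    rw [hsplitset, Finset.card_union_of_disjoint hdisj]
  rcases Nat.lt_or_ge ((Hp.filter (fun h => p ∈ h)).card) (2*k-1) with hc1 | hc1
  · have hc2 : 2*k - 1 ≤ (Hm.filter (fun h => p ∈ h)).card := by omega
    obtain ⟨g, hgHm, hχg, hpg⟩ := hχm p hc2 i
    have hgH : g ∈ H := (Finset.mem_filter.1 hgHm).1
    have hneg : (A g).1 * v.1 + (A g).2 * v.2 < 0 := (Finset.mem_filter.1 hgHm).2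
    refine ⟨g, hgH, ?_, hpg⟩
    simp only [if_neg (by linarith : ¬ (0 < (A g).1 * v.1 + (A g).2 * v.2))]
    exact hχg
  · obtain ⟨g, hgHp, hχg, hpg⟩ := hχp p hc1 i
    have hgH : g ∈ H := (Finset.mem_filter.1 hgHp).1
    have hpos := (Finset.mem_filter.1 hgHp).2
    refine ⟨g, hgH, ?_, hpg⟩
    simp only [if_pos hpos]
    exact hχg
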